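/- If ρ is a stochastically stationary random state for a random Kraus ensemble over an ergodic invertible system, then the annealed quantum probability measure ℚ̄_ρ on Ω × 𝒜^ℕ is invariant under the skew shift τ(ω, ā) = (θ(ω), σ(ā)). -/

import Mathlib

open MeasureTheory Matrix Filter
open scoped ComplexOrder ENNReal

/-- Cylinder set of sequences whose first n coordinates equal a given word. -/
def cyl {𝒜 : Type*} (n : ℕ) (w : Fin n → 𝒜) : Set (ℕ → 𝒜) :=
  {x | ∀ i : Fin n, x i = w i}

/-- V_{n;ω}(a_1,…,a_n) = v_{a_n; θⁿ(ω)} ⋯ v_{a_1; θ(ω)}. -/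
noncomputable def Vq {Ω 𝒜 : Type*} {d : ℕ} (v : Ω → 𝒜 → Matrix (Fin d) (Fin d) ℂ)
    (θ : Ω → Ω) (ω : Ω) : (n : ℕ) → (Fin n → 𝒜) → Matrix (Fin d) (Fin d) ℂ
  | 0, _ => 1
  | n + 1, w => v (θ^[n + 1] ω) (w (Fin.last n)) * Vq v θ ω n (fun i => w i.castSucc)

/-- The left shift σ on 𝒜^ℕ. -/
def shiftSeq {𝒜 : Type*} (x : ℕ → 𝒜) : ℕ → 𝒜 := fun k => x (k + 1)

/-- The skew shift τ(ω, ā) = (θ(ω), σ(ā)). -/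
def tau {Ω 𝒜 : Type*} (θ : Ω → Ω) : Ω × (ℕ → 𝒜) → Ω × (ℕ → 𝒜) :=
  fun p => (θ p.1, shiftSeq p.2)

/-- The annealed quantum measure ℚ̄(Γ) = ∫_Ω ℚ_ω(Γ^ω) dℙ(ω). -/
noncomputable def annealed {Ω 𝒜 : Type*} [MeasurableSpace Ω] [MeasurableSpace 𝒜] (μ : Measure Ω)
    (Q : Ω → Measure (ℕ → 𝒜)) (Γ : Set (Ω × (ℕ → 𝒜))) : ℝ≥0∞ :=
  ∫⁻ ω, Q ω {x | (ω, x) ∈ Γ} ∂μ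

/- ### Auxiliary lemmas -/

lemma measurable_shiftSeq {𝒜 : Type*} [MeasurableSpace 𝒜] :
    Measurable (shiftSeq (𝒜 := 𝒜)) :=
  measurable_pi_lambda _ fun k => measurable_pi_apply (k + 1)

lemma measurableSet_cyl {𝒜 : Type*} [MeasurableSpace 𝒜] [MeasurableSingletonClass 𝒜]
    (n : ℕ) (w : Fin n → 𝒜) : MeasurableSet (cyl n w) := by
  have h : cyl n w = ⋂ i : Fin n, (fun x : ℕ → 𝒜 => x (i : ℕ)) ⁻¹' {w i} := by
    ext x; simp [cyl]
  rw [h]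
  exact MeasurableSet.iInter fun i =>
    (measurable_pi_apply (i : ℕ)) (measurableSet_singleton (w i))

lemma trace_re_nonneg {d : ℕ} {A : Matrix (Fin d) (Fin d) ℂ} (h : A.PosSemidef) :
    0 ≤ A.trace.re := by
  have h1 : ∀ i, (0 : ℂ) ≤ A i i := fun i => by
    exact h.diag_nonneg
  have h2 : (0 : ℂ) ≤ A.trace := Finset.sum_nonneg fun i _ => h1 i
  exact (Complex.le_def.mp h2).1

lemma cyl_inter_of_le {𝒜 : Type*} {n m : ℕ} (h : n ≤ m) (w : Fin n → 𝒜) (u : Fin m → 𝒜)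
    (hne : (cyl n w ∩ cyl m u).Nonempty) : cyl n w ∩ cyl m u = cyl m u := by
  obtain ⟨x, hxw, hxu⟩ := hne
  refine Set.inter_eq_self_of_subset_right fun y hy i => ?_
  have hj : (⟨(i : ℕ), lt_of_lt_of_le i.2 h⟩ : Fin m) = (i : ℕ) := rfl
  have h1 := hy ⟨(i : ℕ), lt_of_lt_of_le i.2 h⟩
  have h2 := hxu ⟨(i : ℕ), lt_of_lt_of_le i.2 h⟩
  have h3 : x (i : ℕ) = w i := hxw i
  rw [h1, ← h2, h3]

lemma cyl_pi_system {𝒜 : Type*} :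
    IsPiSystem {S : Set (ℕ → 𝒜) | ∃ n w, S = cyl n w} := by
  rintro s ⟨n, w, rfl⟩ t ⟨m, u, rfl⟩ hne
  rcases le_total n m with h | h
  · rw [cyl_inter_of_le h w u hne]; exact ⟨m, u, rfl⟩
  · rw [Set.inter_comm] at hne ⊢
    rw [cyl_inter_of_le h u w hne]; exact ⟨n, w, rfl⟩

lemma cyl_generate {𝒜 : Type*} [Fintype 𝒜] [MeasurableSpace 𝒜] [MeasurableSingletonClass 𝒜] :
    (inferInstance : MeasurableSpace (ℕ → 𝒜)) =
      MeasurableSpace.generateFrom {S : Set (ℕ → 𝒜) | ∃ n w, S = cyl n w} := by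
  refine le_antisymm ?_ (MeasurableSpace.generateFrom_le ?_)
  · refine iSup_le fun i => ?_
    rw [MeasurableSpace.comap_le_iff_le_map]
    intro s _
    have hset : (fun x : ℕ → 𝒜 => x i) ⁻¹' s
        = ⋃ (w : Fin (i + 1) → 𝒜) (_ : w (Fin.last i) ∈ s), cyl (i + 1) w := by
      ext x
      simp only [Set.mem_preimage, Set.mem_iUnion, cyl, Set.mem_setOf_eq]
      constructor
      · intro hx
        exact ⟨fun j => x (j : ℕ), by simpa using hx, fun j => rfl⟩
      · rintro ⟨w, hw, hxw⟩
        have := hxw (Fin.last i)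
        simp only [Fin.val_last] at this
        rw [this]; exact hw
    rw [MeasurableSpace.map_def, hset]
    exact MeasurableSet.iUnion fun w => MeasurableSet.iUnion fun _ =>
      MeasurableSpace.measurableSet_generateFrom ⟨i + 1, w, rfl⟩
  · rintro s ⟨n, w, rfl⟩
    exact measurableSet_cyl n w

lemma measure_eq_of_cyl {𝒜 : Type*} [Fintype 𝒜] [MeasurableSpace 𝒜] [MeasurableSingletonClass 𝒜]
    (μ1 μ2 : Measure (ℕ → 𝒜)) [IsProbabilityMeasure μ1] [IsProbabilityMeasure μ2]
    (h : ∀ n w, μ1 (cyl n w) = μ2 (cyl n w)) : μ1 = μ2 := by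
  refine ext_of_generate_finite _ cyl_generate cyl_pi_system ?_ (by simp)
  rintro s ⟨n, w, rfl⟩
  exact h n w

lemma Vq_cons {Ω 𝒜 : Type*} {d : ℕ} (v : Ω → 𝒜 → Matrix (Fin d) (Fin d) ℂ) (θ : Ω → Ω) :
    ∀ (n : ℕ) (ω : Ω) (w : Fin n → 𝒜) (a : 𝒜),
      Vq v θ ω (n + 1) (Fin.cons a w) = Vq v θ (θ ω) n w * v (θ ω) a
  | 0, ω, w, a => by simp [Vq]
  | (n + 1), ω, w, a => by
    have hc : (fun i : Fin (n + 1) => (Fin.cons a w : Fin (n + 2) → 𝒜) i.castSucc)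
        = Fin.cons a (fun i : Fin n => w i.castSucc) := by
      funext i
      refine Fin.cases ?_ (fun j => ?_) i
      · simp
      · rw [← Fin.succ_castSucc]
        simp
    show v (θ^[n + 2] ω) ((Fin.cons a w : Fin (n + 2) → 𝒜) (Fin.last (n + 1)))
          * Vq v θ ω (n + 1) (fun i => (Fin.cons a w : Fin (n + 2) → 𝒜) i.castSucc)
        = Vq v θ (θ ω) (n + 1) w * v (θ ω) a
    rw [hc, Vq_cons v θ n ω (fun i => w i.castSucc) a]
    have h1 : (Fin.cons a w : Fin (n + 2) → 𝒜) (Fin.last (n + 1)) = w (Fin.last n) := by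
      rw [← Fin.succ_last, Fin.cons_succ]
    have h2 : θ^[n + 2] ω = θ^[n + 1] (θ ω) := Function.iterate_succ_apply θ (n + 1) ω
    rw [h1, h2]
    show _ = Vq v θ (θ ω) (n + 1) w * v (θ ω) a
    simp [Vq, mul_assoc]

lemma shift_preimage_cyl {𝒜 : Type*} (n : ℕ) (w : Fin n → 𝒜) :
    shiftSeq ⁻¹' cyl n w = ⋃ a : 𝒜, cyl (n + 1) (Fin.cons a w) := by
  ext x
  simp only [Set.mem_preimage, Set.mem_iUnion, cyl, Set.mem_setOf_eq, shiftSeq]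
  constructor
  · intro h
    refine ⟨x 0, fun i => ?_⟩
    refine Fin.cases ?_ (fun j => ?_) i
    · simp
    · simpa [Fin.val_succ] using h j
  · rintro ⟨a, h⟩ i
    simpa [Fin.val_succ] using h i.succ

/-- If ρ is a stochastically stationary random state for a random Kraus ensemble over an
ergodic invertible system, then the annealed quantum measure ℚ̄_ρ is invariant under the
skew shift τ(ω, ā) = (θ(ω), σ(ā)). -/
theorem stmt9 {Ω 𝒜 : Type*} {d : ℕ} [Fintype 𝒜] [MeasurableSpace 𝒜]
    [MeasurableSingletonClass 𝒜]
    [MeasurableSpace Ω] (μ : Measure Ω) [IsProbabilityMeasure μ]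
    (θ θinv : Ω → Ω) (hθ : Ergodic θ μ)
    (hinvm : Measurable θinv) (hli : Function.LeftInverse θinv θ)
    (hri : Function.RightInverse θinv θ)
    (v : Ω → 𝒜 → Matrix (Fin d) (Fin d) ℂ)
    (hvmeas : ∀ a i j, Measurable fun ω => v ω a i j)
    (hv : ∀ᵐ ω ∂μ, ∑ a, (v ω a)ᴴ * v ω a = 1)
    (ρ : Ω → Matrix (Fin d) (Fin d) ℂ)
    (hρmeas : ∀ i j, Measurable fun ω => ρ ω i j)
    (hρ : ∀ᵐ ω ∂μ, (ρ ω).PosSemidef ∧ (ρ ω).trace = 1)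
    (hstat : ∀ᵐ ω ∂μ, ∑ a, v (θ ω) a * ρ ω * (v (θ ω) a)ᴴ = ρ (θ ω))
    (Q : Ω → Measure (ℕ → 𝒜)) (hQp : ∀ ω, IsProbabilityMeasure (Q ω))
    (hQmeas : ∀ E : Set (ℕ → 𝒜), MeasurableSet E → Measurable fun ω => Q ω E)
    (hQcyl : ∀ n (w : Fin n → 𝒜), ∀ᵐ ω ∂μ,
      Q ω (cyl n w) = ENNReal.ofReal
        (Matrix.trace (Vq v θ ω n w * ρ ω * (Vq v θ ω n w)ᴴ)).re) :
    ∀ Γ : Set (Ω × (ℕ → 𝒜)), MeasurableSet Γ →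
      annealed μ Q (tau θ ⁻¹' Γ) = annealed μ Q Γ := by
  intro Γ hΓ
  have hθm : Measurable θ := hθ.toMeasurePreserving.measurable
  have hmapinv : Measure.map θinv μ = μ := by
    conv_lhs => rw [← hθ.toMeasurePreserving.map_eq]
    rw [Measure.map_map hinvm hθm]
    have h : θinv ∘ θ = id := funext hli
    rw [h, Measure.map_id]
  have hmpinv : MeasurePreserving θinv μ μ := ⟨hinvm, hmapinv⟩
  have htd : Tendsto θinv (ae μ) (ae μ) := hmpinv.quasiMeasurePreserving.tendsto_ae
  -- all-cylinders a.e. statement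
  have hQall : ∀ᵐ ω ∂μ, ∀ p : (Σ n : ℕ, Fin n → 𝒜),
      Q ω (cyl p.1 p.2) = ENNReal.ofReal
        (Matrix.trace (Vq v θ ω p.1 p.2 * ρ ω * (Vq v θ ω p.1 p.2)ᴴ)).re :=
    ae_all_iff.mpr fun p => hQcyl p.1 p.2
  have h1 := htd.eventually hQall
  have h2 := htd.eventually hρ
  have h3 := htd.eventually hstat
  -- the key a.e. identity of measures
  have key : ∀ᵐ ω ∂μ, (Q (θinv ω)).map shiftSeq = Q ω := by
    filter_upwards [hQall, h1, h2, h3] with ω hq1 hq2 hρω hstatω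
    haveI := hQp ω
    haveI := hQp (θinv ω)
    haveI : IsProbabilityMeasure ((Q (θinv ω)).map shiftSeq) :=
      Measure.isProbabilityMeasure_map measurable_shiftSeq.aemeasurable
    refine measure_eq_of_cyl _ _ fun n w => ?_
    have hstat' : ∑ a, v ω a * ρ (θinv ω) * (v ω a)ᴴ = ρ ω := by
      have h := hstatω; rwa [hri ω] at h
    have hdisj : Pairwise (Function.onFun Disjoint fun a : 𝒜 => cyl (n + 1) (Fin.cons a w)) := by
      intro a b hab
      refine Set.disjoint_left.mpr fun x hxa hxb => hab ?_
      have ha := hxa 0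
      have hb := hxb 0
      simp only [Fin.val_zero, Fin.cons_zero] at ha hb
      rw [← ha, ← hb]
    rw [Measure.map_apply measurable_shiftSeq (measurableSet_cyl n w), shift_preimage_cyl,
      measure_iUnion hdisj (fun a => measurableSet_cyl _ _), tsum_fintype]
    have hterm : ∀ a : 𝒜, Q (θinv ω) (cyl (n + 1) (Fin.cons a w))
        = ENNReal.ofReal (Matrix.trace ((Vq v θ ω n w * v ω a) * ρ (θinv ω)
            * (Vq v θ ω n w * v ω a)ᴴ)).re := by
      intro a
      have h := hq2 ⟨n + 1, Fin.cons a w⟩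
      rwa [Vq_cons, hri ω] at h
    rw [Finset.sum_congr rfl fun a _ => hterm a]
    have hpsd : ∀ a : 𝒜,
        ((Vq v θ ω n w * v ω a) * ρ (θinv ω) * (Vq v θ ω n w * v ω a)ᴴ).PosSemidef :=
      fun a => hρω.1.mul_mul_conjTranspose_same _
    rw [← ENNReal.ofReal_sum_of_nonneg (fun a _ => trace_re_nonneg (hpsd a)),
      ← Complex.re_sum, ← Matrix.trace_sum]
    have hmat : ∑ a, ((Vq v θ ω n w * v ω a) * ρ (θinv ω) * (Vq v θ ω n w * v ω a)ᴴ)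
        = Vq v θ ω n w * ρ ω * (Vq v θ ω n w)ᴴ := by
      have hterm2 : ∀ a : 𝒜, (Vq v θ ω n w * v ω a) * ρ (θinv ω) * (Vq v θ ω n w * v ω a)ᴴ
          = Vq v θ ω n w * (v ω a * ρ (θinv ω) * (v ω a)ᴴ) * (Vq v θ ω n w)ᴴ := by
        intro a
        simp only [conjTranspose_mul, mul_assoc]
      rw [Finset.sum_congr rfl fun a _ => hterm2 a, ← Finset.sum_mul, ← Finset.mul_sum,
        hstat']
    rw [hmat]
    exact (hq1 ⟨n, w⟩).symm
  -- measurability of the integrand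
  have hτm : Measurable (tau θ (𝒜 := 𝒜)) :=
    (hθm.comp measurable_fst).prodMk (measurable_shiftSeq.comp measurable_snd)
  have hΓ' : MeasurableSet (tau θ ⁻¹' Γ) := hτm hΓ
  let κ : ProbabilityTheory.Kernel Ω (ℕ → 𝒜) :=
    ⟨Q, Measure.measurable_of_measurable_coe _ hQmeas⟩
  haveI : ProbabilityTheory.IsMarkovKernel κ := ⟨hQp⟩
  have hF : Measurable fun ω => Q ω {x | (ω, x) ∈ tau θ ⁻¹' Γ} :=
    ProbabilityTheory.Kernel.measurable_kernel_prodMk_left (κ := κ) hΓ'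
  unfold annealed
  calc ∫⁻ ω, Q ω {x | (ω, x) ∈ tau θ ⁻¹' Γ} ∂μ
      = ∫⁻ ω, Q (θinv ω) {x | (θinv ω, x) ∈ tau θ ⁻¹' Γ} ∂μ := by
        conv_lhs => rw [← hmapinv]
        rw [lintegral_map hF hinvm]
    _ = ∫⁻ ω, Q ω {x | (ω, x) ∈ Γ} ∂μ := by
        refine lintegral_congr_ae ?_
        filter_upwards [key] with ω hk
        have hsec : {x | (θinv ω, x) ∈ tau θ ⁻¹' Γ} = shiftSeq ⁻¹' {x | (ω, x) ∈ Γ} := by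
          ext x
          simp [tau, hri ω]
        rw [hsec, ← hk]
        exact (Measure.map_apply measurable_shiftSeq (measurable_prodMk_left hΓ)).symm
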